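/- Let A ∈ M_m(K) and let (r,s) be the position of a marked entry of A. Then there exist an invertible lower triangular matrix C ∈ GL_m(K) and an upper triangular matrix D ∈ M_m(K) with Dᵢᵢ = Cᵢᵢ⁻¹ for all i, such that the matrix B = C A D satisfies B_{rj} = 0 for all j ≠ s and B_{is} = 0 for all i ≠ r (while B_{rs} = C_{rr}C_{ss}⁻¹A_{rs} ≠ 0). -/

import Mathlib

open Matrix

/-- An entry of `A` at position `(r,s)` is *marked* if it is nonzero and all other
entries `A i j` with `i ≤ r`, `j ≤ s` vanish. -/
def Marked {K : Type*} [Field K] {m : ℕ} (A : Matrix (Fin m) (Fin m) K)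
    (r s : Fin m) : Prop :=
  A r s ≠ 0 ∧ ∀ i j : Fin m, i ≤ r → j ≤ s → (i, j) ≠ (r, s) → A i j = 0

/-- Lemma 3.4: a marked entry can be used to clear its row and column by a
μ-similarity transformation (μ = (1,…,1)). -/
theorem stmt_8 {K : Type*} [Field K] {m : ℕ}
    (A : Matrix (Fin m) (Fin m) K) (r s : Fin m) (hrs : Marked A r s) :
    ∃ C D : Matrix (Fin m) (Fin m) K,
      IsUnit C ∧ (∀ i j : Fin m, i < j → C i j = 0) ∧
      (∀ i j : Fin m, j < i → D i j = 0) ∧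
      (∀ i : Fin m, D i i = (C i i)⁻¹) ∧
      (∀ j : Fin m, j ≠ s → (C * A * D) r j = 0) ∧
      (∀ i : Fin m, i ≠ r → (C * A * D) i s = 0) ∧
      (C * A * D) r s = C r r * (C s s)⁻¹ * A r s ∧
      (C * A * D) r s ≠ 0 := by
  obtain ⟨hA, hz⟩ := hrs
  set C : Matrix (Fin m) (Fin m) K :=
    fun i j => if i = j then 1 else if j = r ∧ r < i then -(A i s) / A r s else 0 with hC
  set D : Matrix (Fin m) (Fin m) K :=
    fun i j => if i = j then 1 else if i = s ∧ s < j then -(A r j) / A r s else 0 with hD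
  have hClt : ∀ i j : Fin m, i < j → C i j = 0 := by
    intro i j h
    simp only [hC, if_neg h.ne, ite_eq_right_iff]
    rintro ⟨rfl, h2⟩
    exact absurd (h2.trans h) (lt_irrefl _)
  have hDlt : ∀ i j : Fin m, j < i → D i j = 0 := by
    intro i j h
    simp only [hD, if_neg h.ne', ite_eq_right_iff]
    rintro ⟨rfl, h2⟩
    exact absurd (h2.trans h) (lt_irrefl _)
  have hCd : ∀ i : Fin m, C i i = 1 := by
    intro i; simp [hC]
  have hDd : ∀ i : Fin m, D i i = 1 := by
    intro i; simp [hD]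
  -- row r of C is e_r
  have hCrow : ∀ k : Fin m, k ≠ r → C r k = 0 := by
    intro k hk
    simp [hC, (Ne.symm hk : r ≠ k), hk]
  -- column s of D is e_s
  have hDcol : ∀ k : Fin m, k ≠ s → D k s = 0 := by
    intro k hk
    simp [hD, hk]
  have h1 : ∀ (M : Matrix (Fin m) (Fin m) K) (j : Fin m), (C * M) r j = M r j := by
    intro M j
    rw [Matrix.mul_apply, Finset.sum_eq_single r]
    · rw [hCd]; ring
    · intro k _ hk; rw [hCrow k hk, zero_mul]
    · simp
  have h2 : ∀ (M : Matrix (Fin m) (Fin m) K) (i : Fin m), (M * D) i s = M i s := by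
    intro M i
    rw [Matrix.mul_apply, Finset.sum_eq_single s]
    · rw [hDd]; ring
    · intro k _ hk; rw [hDcol k hk, mul_zero]
    · simp
  -- (A*D) r j = 0 for j ≠ s
  have hAD : ∀ j : Fin m, j ≠ s → (A * D) r j = 0 := by
    intro j hj
    rcases lt_or_gt_of_ne hj with hlt | hgt
    · -- j < s : D k j nonzero only at k = j, and A r j = 0
      rw [Matrix.mul_apply, Finset.sum_eq_single j]
      · rw [hz r j le_rfl hlt.le (by simp [hj]), zero_mul]
      · intro k _ hk
        rcases eq_or_ne k s with rfl | hks
        · rw [hDlt _ j hlt, mul_zero]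
        · have : D k j = 0 := by
            simp only [hD, if_neg hk, ite_eq_right_iff]
            rintro ⟨h', -⟩; exact absurd h' hks
          rw [this, mul_zero]
      · simp
    · -- s < j
      rw [Matrix.mul_apply]
      have hsub : ({j, s} : Finset (Fin m)) ⊆ Finset.univ := Finset.subset_univ _
      rw [← Finset.sum_subset hsub]
      · rw [Finset.sum_pair (Ne.symm hj).symm]
        have hDsj : D s j = -(A r j) / A r s := by
          simp [hD, hj.symm, hgt]
        rw [hDd, hDsj]
        field_simp
        ring
      · intro k _ hk
        simp only [Finset.mem_insert, Finset.mem_singleton, not_or] at hk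
        have : D k j = 0 := by
          simp only [hD, if_neg hk.1, ite_eq_right_iff]
          rintro ⟨h', -⟩; exact absurd h' hk.2
        rw [this, mul_zero]
  -- (C*A) i s = 0 for i ≠ r
  have hCA : ∀ i : Fin m, i ≠ r → (C * A) i s = 0 := by
    intro i hi
    rcases lt_or_gt_of_ne hi with hlt | hgt
    · rw [Matrix.mul_apply, Finset.sum_eq_single i]
      · rw [hz i s hlt.le le_rfl (by simp [hi]), mul_zero]
      · intro k _ hk
        rcases eq_or_ne k r with rfl | hkr
        · rw [hClt i _ hlt, zero_mul]
        · have : C i k = 0 := by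
            simp only [hC, if_neg (Ne.symm hk), ite_eq_right_iff]
            rintro ⟨h', -⟩; exact absurd h' hkr
          rw [this, zero_mul]
      · simp
    · rw [Matrix.mul_apply]
      have hsub : ({i, r} : Finset (Fin m)) ⊆ Finset.univ := Finset.subset_univ _
      rw [← Finset.sum_subset hsub]
      · rw [Finset.sum_pair hi]
        have hCir : C i r = -(A i s) / A r s := by
          simp [hC, hi, hgt]
        rw [hCd, hCir]
        field_simp
        ring
      · intro k _ hk
        simp only [Finset.mem_insert, Finset.mem_singleton, not_or] at hk
        have : C i k = 0 := by
          simp only [hC, if_neg (Ne.symm hk.1), ite_eq_right_iff]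
          rintro ⟨h', -⟩; exact absurd h' hk.2
        rw [this, zero_mul]
  have hBrs : (C * A * D) r s = A r s := by
    rw [h2 (C * A) r, h1 A s]
  refine ⟨C, D, ?_, hClt, hDlt, ?_, ?_, ?_, ?_, ?_⟩
  · -- IsUnit C
    have hdet : C.det = 1 := by
      rw [Matrix.det_of_lowerTriangular C hClt]
      simp [hCd]
    rw [Matrix.isUnit_iff_isUnit_det, hdet]
    exact isUnit_one
  · intro i; rw [hCd, hDd, inv_one]
  · intro j hj
    rw [Matrix.mul_assoc, h1 (A * D) j, hAD j hj]
  · intro i hi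
    rw [h2 (C * A) i, hCA i hi]
  · rw [hBrs, hCd, hCd, inv_one]; ring
  · rw [hBrs]; exact hA
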